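/- Let σ be a B-avoiding permutation of {1,...,n-1}. Then the permutation obtained by increasing every value of σ by 1 and appending the value 1 at the end is a B-avoiding permutation of {1,...,n}. -/

import Mathlib

/-- `l` is a permutation of `{1, ..., n}`, viewed as the sequence of its values. -/
def IsPermOf (l : List ℕ) (n : ℕ) : Prop := l.Perm (List.range' 1 n)

/-- `l` is B-avoiding: there are no indices `a < b < c < d` with
`max {l a, l c} < min {l b, l d}`. -/
def BAvoid (l : List ℕ) : Prop :=
  ∀ a b c d : Fin l.length, a < b → b < c → c < d →
    ¬ (max (l.get a) (l.get c) < min (l.get b) (l.get d))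

/-- increase all values by 1 and insert `1` immediately before the value `2`. -/
def fBefore (σ : List ℕ) : List ℕ :=
  ((σ.map (· + 1)).take ((σ.map (· + 1)).idxOf 2)) ++
    1 :: ((σ.map (· + 1)).drop ((σ.map (· + 1)).idxOf 2))

/-- increase all values by 1 and insert `1` immediately after the value `2`. -/
def fAfter (σ : List ℕ) : List ℕ :=
  ((σ.map (· + 1)).take ((σ.map (· + 1)).idxOf 2 + 1)) ++
    1 :: ((σ.map (· + 1)).drop ((σ.map (· + 1)).idxOf 2 + 1))

/-- increase all values by 1 and append `1` at the end. -/
def fEnd (σ : List ℕ) : List ℕ := σ.map (· + 1) ++ [1]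

/-- increase all values by 1, replace the value `2` by `1`, and append `2` at the end. -/
def fBump (σ : List ℕ) : List ℕ :=
  (σ.map (· + 1)).map (fun x => if x = 2 then 1 else x) ++ [2]

theorem stmt5 (n : ℕ) (hn : 1 ≤ n) (σ : List ℕ)
    (hσ : IsPermOf σ (n - 1)) (hB : BAvoid σ) :
    IsPermOf (fEnd σ) n ∧ BAvoid (fEnd σ) := by
  constructor
  · unfold IsPermOf fEnd
    have h1 : List.range' 1 n = 1 :: List.range' 2 (n - 1) := by
      obtain ⟨m, rfl⟩ := Nat.exists_eq_add_of_le hn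
      simp [List.range'_succ, Nat.add_comm]
    rw [h1]
    have h2 : (σ.map (· + 1)).Perm (List.range' 2 (n - 1)) := by
      have := hσ.map (· + 1)
      have hm : List.map (· + 1) (List.range' 1 (n - 1)) = List.range' 2 (n - 1) := by
        have := List.map_add_range' (a := 1) 1 (n - 1) 1
        simpa [Nat.add_comm] using this
      rwa [hm] at this
    exact (h2.append_right [1]).trans (List.perm_append_singleton 1 _)
  · intro a b c d hab hbc hcd h
    have hlen : (fEnd σ).length = σ.length + 1 := by simp [fEnd]
    have hd' : (d : ℕ) < σ.length + 1 := hlen ▸ d.isLt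
    have hc : (c : ℕ) < σ.length := by
      have := hcd; omega
    have hb : (b : ℕ) < σ.length := by omega
    have ha : (a : ℕ) < σ.length := by omega
    have gget : ∀ (i : Fin (fEnd σ).length) (hi : (i : ℕ) < σ.length),
        (fEnd σ).get i = σ.get ⟨i, hi⟩ + 1 := by
      intro i hi
      rw [List.get_eq_getElem]
      simp [fEnd, List.get_eq_getElem, List.getElem_append_left, hi]
    rw [gget a ha, gget c hc, gget b hb] at h
    rcases Nat.lt_or_ge (d : ℕ) σ.length with hdlt | hdge
    · rw [gget d hdlt] at h
      exact hB ⟨a, ha⟩ ⟨b, hb⟩ ⟨c, hc⟩ ⟨d, hdlt⟩ hab hbc hcd (by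
        simp only [List.get_eq_getElem] at h ⊢
        omega)
    · have hdl : (d : ℕ) = σ.length := by omega
      have : (fEnd σ).get d = 1 := by
        rw [List.get_eq_getElem]
        simp [fEnd, List.get_eq_getElem, hdl]
      rw [this] at h
      omega
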